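/- Let a < b, k ≥ 1 odd, and let a ≤ x_1 < x_2 < ... < x_n ≤ b be given points. Define f_n as in Theorem 1: -(x-x_1)^k on [a,x_1], the basic unit on each [x_i, x_{i+1}], and (x-x_n)^k on [x_n, b]. Then f_n(x_i) = 0 for all i, and ∫_a^b f_n(x) dx = (x_1-a)^{k+1}/(k+1) + Σ_{i=1}^{n-1} (x_{i+1}-x_i)^{k+1}/4^k + (b-x_n)^{k+1}/(k+1). -/

import Mathlib

open MeasureTheory Set intervalIntegral

noncomputable def basicUnitOdd (k : ℕ) (p q x : ℝ) : ℝ :=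
  if x ≤ p + (q - p)/4 then (x - p)^k
  else if x ≤ p + (q - p)/2 then (x - (p + (q - p)/2))^k + 2*((q - p)/4)^k
  else if x ≤ p + 3*(q - p)/4 then -(x - (p + (q - p)/2))^k + 2*((q - p)/4)^k
  else -(x - q)^k

lemma eqOn_integral {f g : ℝ → ℝ} {u v : ℝ} (huv : u ≤ v)
    (hg : IntervalIntegrable g volume u v) (h : Set.EqOn f g (Set.Icc u v)) :
    IntervalIntegrable f volume u v ∧ (∫ t in u..v, f t = ∫ t in u..v, g t) := by
  constructor
  · rw [intervalIntegrable_iff_integrableOn_Ioc_of_le huv] at hg ⊢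
    exact hg.congr_fun (fun t ht => (h (Set.Ioc_subset_Icc_self ht)).symm) measurableSet_Ioc
  · exact intervalIntegral.integral_congr (fun t ht => h (by rwa [Set.uIcc_of_le huv] at ht))

lemma integ_pow_sub (k : ℕ) (c u v : ℝ) :
    ∫ t in u..v, (t - c)^k = ((v-c)^(k+1) - (u-c)^(k+1))/((k:ℝ)+1) := by
  have := intervalIntegral.integral_comp_sub_right (a := u) (b := v) (fun x => x^k) c
  rw [this, integral_pow]

lemma basicUnit_integral (k : ℕ) (hk : 1 ≤ k) (hodd : Odd k) (p q : ℝ) (hpq : p < q) :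
    IntervalIntegrable (basicUnitOdd k p q) volume p q ∧
    ∫ t in p..q, basicUnitOdd k p q t = (q-p)^(k+1)/4^k := by
  have hk0 : k ≠ 0 := by omega
  have hev : Even (k+1) := hodd.add_one
  set h := (q - p)/4 with hh
  have hh0 : 0 < h := by rw [hh]; linarith
  have e1 : p + (q - p)/4 = p + h := by rw [hh]
  have e2 : p + (q - p)/2 = p + 2*h := by rw [hh]; ring
  have e3 : p + 3*(q - p)/4 = p + 3*h := by rw [hh]; ring
  have eq4 : q = p + 4*h := by rw [hh]; ring
  have hq1 : p + h < p + (q-p)/2 := by rw [e2]; linarith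
  have hq2 : p + 2*h < p + 3*(q-p)/4 := by rw [e3]; linarith
  -- piece 1
  have P1 : IntervalIntegrable (basicUnitOdd k p q) volume p (p+h) ∧
      ∫ t in p..(p+h), basicUnitOdd k p q t = h^(k+1)/((k:ℝ)+1) := by
    have hcont : Continuous (fun t : ℝ => (t - p)^k) := by fun_prop
    have heq : Set.EqOn (basicUnitOdd k p q) (fun t : ℝ => (t - p)^k) (Set.Icc p (p+h)) := by
      intro t ht
      simp only [basicUnitOdd]
      rw [if_pos (by rw [e1]; exact ht.2)]
    obtain ⟨hI, hE⟩ := eqOn_integral (by linarith) (hcont.intervalIntegrable _ _) heq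
    refine ⟨hI, ?_⟩
    rw [hE, integ_pow_sub]
    simp [zero_pow (by omega : k + 1 ≠ 0)]
  -- piece 2
  have P2 : IntervalIntegrable (basicUnitOdd k p q) volume (p+h) (p+2*h) ∧
      ∫ t in (p+h)..(p+2*h), basicUnitOdd k p q t
        = -h^(k+1)/((k:ℝ)+1) + 2*h^(k+1) := by
    have hcont : Continuous (fun t : ℝ => (t - (p+2*h))^k + 2*h^k) := by fun_prop
    have heq : Set.EqOn (basicUnitOdd k p q) (fun t : ℝ => (t - (p+2*h))^k + 2*h^k)
        (Set.Icc (p+h) (p+2*h)) := by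
      intro t ht
      simp only [basicUnitOdd]
      by_cases hc : t ≤ p + (q-p)/4
      · have ht1 : t = p + h := le_antisymm (by rw [e1] at hc; exact hc) ht.1
        rw [if_pos hc, ht1]
        have e5 : p + h - (p + 2*h) = -h := by ring
        rw [e5, hodd.neg_pow]
        ring
      · rw [if_neg hc, if_pos (by rw [e2]; exact ht.2), e2, ← hh]
    obtain ⟨hI, hE⟩ := eqOn_integral (by linarith) (hcont.intervalIntegrable _ _) heq
    refine ⟨hI, ?_⟩
    rw [hE]
    rw [intervalIntegral.integral_add ((by fun_prop : Continuous
          (fun t : ℝ => (t - (p+2*h))^k)).intervalIntegrable _ _)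
        (intervalIntegrable_const), integ_pow_sub,
      intervalIntegral.integral_const]
    have e5 : (p + h - (p + 2*h)) = -h := by ring
    rw [e5, hev.neg_pow]
    have e6 : (p + 2*h - (p + 2*h)) = 0 := by ring
    rw [e6, zero_pow (by omega : k + 1 ≠ 0)]
    have e7 : (p + 2*h - (p + h)) = h := by ring
    rw [e7, smul_eq_mul, pow_succ]
    ring
  -- piece 3
  have P3 : IntervalIntegrable (basicUnitOdd k p q) volume (p+2*h) (p+3*h) ∧
      ∫ t in (p+2*h)..(p+3*h), basicUnitOdd k p q t
        = -h^(k+1)/((k:ℝ)+1) + 2*h^(k+1) := by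
    have hcont : Continuous (fun t : ℝ => -(t - (p+2*h))^k + 2*h^k) := by fun_prop
    have heq : Set.EqOn (basicUnitOdd k p q) (fun t : ℝ => -(t - (p+2*h))^k + 2*h^k)
        (Set.Icc (p+2*h) (p+3*h)) := by
      intro t ht
      simp only [basicUnitOdd]
      have hc1 : ¬ t ≤ p + (q-p)/4 := by rw [e1]; linarith [ht.1]
      by_cases hc : t ≤ p + (q-p)/2
      · have ht1 : t = p + 2*h := le_antisymm (by rw [e2] at hc; exact hc) ht.1
        rw [if_neg hc1, if_pos hc, ht1, e2, ← hh]
        simp [zero_pow hk0]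
      · rw [if_neg hc1, if_neg hc, if_pos (by rw [e3]; exact ht.2), e2, ← hh]
    obtain ⟨hI, hE⟩ := eqOn_integral (by linarith) (hcont.intervalIntegrable _ _) heq
    refine ⟨hI, ?_⟩
    rw [hE]
    rw [intervalIntegral.integral_add ((by fun_prop : Continuous
          (fun t : ℝ => -(t - (p+2*h))^k)).intervalIntegrable _ _)
        (intervalIntegrable_const),
      intervalIntegral.integral_neg, integ_pow_sub,
      intervalIntegral.integral_const]
    have e5 : (p + 3*h - (p + 2*h)) = h := by ring
    rw [e5]
    have e6 : (p + 2*h - (p + 2*h)) = 0 := by ring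
    rw [e6, zero_pow (by omega : k + 1 ≠ 0), smul_eq_mul]
    rw [pow_succ]
    ring
  -- piece 4
  have P4 : IntervalIntegrable (basicUnitOdd k p q) volume (p+3*h) q ∧
      ∫ t in (p+3*h)..q, basicUnitOdd k p q t = h^(k+1)/((k:ℝ)+1) := by
    have hcont : Continuous (fun t : ℝ => -(t - q)^k) := by fun_prop
    have heq : Set.EqOn (basicUnitOdd k p q) (fun t : ℝ => -(t - q)^k)
        (Set.Icc (p+3*h) q) := by
      intro t ht
      simp only [basicUnitOdd]
      have hc1 : ¬ t ≤ p + (q-p)/4 := by rw [e1]; nlinarith [ht.1]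
      have hc2 : ¬ t ≤ p + (q-p)/2 := by rw [e2]; nlinarith [ht.1]
      by_cases hc : t ≤ p + 3*(q-p)/4
      · have ht1 : t = p + 3*h := le_antisymm (by rw [e3] at hc; exact hc) ht.1
        rw [if_neg hc1, if_neg hc2, if_pos hc, ht1, e2, ← hh]
        have e5 : p + 3*h - (p + 2*h) = h := by ring
        rw [e5]
        have e6 : p + 3*h - q = -h := by rw [eq4]; ring
        rw [e6, hodd.neg_pow]
        ring
      · rw [if_neg hc1, if_neg hc2, if_neg hc]
    obtain ⟨hI, hE⟩ := eqOn_integral (by rw [eq4]; linarith) (hcont.intervalIntegrable _ _) heq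
    refine ⟨hI, ?_⟩
    rw [hE, intervalIntegral.integral_neg, integ_pow_sub]
    have e5 : (p + 3*h - q) = -h := by rw [eq4]; ring
    rw [e5, hev.neg_pow, sub_self, zero_pow (by omega : k + 1 ≠ 0)]
    ring
  -- combine
  have A12 := P1.1.trans P2.1
  have A123 := A12.trans P3.1
  have A := A123.trans P4.1
  rw [eq4]
  constructor
  · rw [← eq4]; exact A
  · rw [← eq4]
    rw [← intervalIntegral.integral_add_adjacent_intervals A123 P4.1,
        ← intervalIntegral.integral_add_adjacent_intervals A12 P3.1,
        ← intervalIntegral.integral_add_adjacent_intervals P1.1 P2.1,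
        P1.2, P2.2, P3.2, P4.2]
    have h4 : q - p = 4*h := by rw [hh]; ring
    rw [h4]
    have : (4*h)^(k+1) = 4^(k+1) * h^(k+1) := by rw [mul_pow]
    rw [this, pow_succ]
    field_simp
    ring

lemma basicUnit_right_zero (k : ℕ) (hk : 1 ≤ k) (p q : ℝ) (hpq : p < q) :
    basicUnitOdd k p q q = 0 := by
  simp only [basicUnitOdd]
  rw [if_neg (by linarith), if_neg (by linarith), if_neg (by linarith),
    sub_self, zero_pow (by omega : k ≠ 0), neg_zero]

theorem full_spline_integral_odd (k : ℕ) (hk : 1 ≤ k) (hodd : Odd k)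
    (a b : ℝ) (hab : a < b) (m : ℕ) (x : Fin (m + 1) → ℝ) (hmono : StrictMono x)
    (ha : a ≤ x 0) (hb : x (Fin.last m) ≤ b) (f : ℝ → ℝ)
    (h1 : ∀ t ∈ Set.Icc a (x 0), f t = -(t - x 0)^k)
    (h2 : ∀ i : Fin m, ∀ t ∈ Set.Icc (x i.castSucc) (x i.succ),
        f t = basicUnitOdd k (x i.castSucc) (x i.succ) t)
    (h3 : ∀ t ∈ Set.Icc (x (Fin.last m)) b, f t = (t - x (Fin.last m))^k) :
    (∀ i, f (x i) = 0) ∧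
    ∫ t in a..b, f t =
      (x 0 - a)^(k+1) / ((k : ℝ) + 1)
      + (∑ i : Fin m, (x i.succ - x i.castSucc)^(k+1) / 4^k)
      + (b - x (Fin.last m))^(k+1) / ((k : ℝ) + 1) := by
  have hk0 : k ≠ 0 := by omega
  have hev : Even (k+1) := hodd.add_one
  -- key per-segment facts
  have key : ∀ i : Fin m, IntervalIntegrable f volume (x i.castSucc) (x i.succ) ∧
      ∫ t in (x i.castSucc)..(x i.succ), f t
        = (x i.succ - x i.castSucc)^(k+1)/4^k := by
    intro i
    have hpq : x i.castSucc < x i.succ := hmono (Fin.castSucc_lt_succ (i := i))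
    obtain ⟨hInt, hVal⟩ := basicUnit_integral k hk hodd _ _ hpq
    obtain ⟨hI, hE⟩ := eqOn_integral hpq.le hInt (h2 i)
    exact ⟨hI, hE.trans hVal⟩
  constructor
  · intro i
    induction i using Fin.cases with
    | zero =>
      rw [h1 (x 0) ⟨ha, le_refl _⟩, sub_self, zero_pow hk0, neg_zero]
    | succ j =>
      have hpq : x j.castSucc < x j.succ := hmono (Fin.castSucc_lt_succ (i := j))
      rw [h2 j (x j.succ) ⟨hpq.le, le_refl _⟩, basicUnit_right_zero k hk _ _ hpq]
  · -- first segment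
    have S1 : IntervalIntegrable f volume a (x 0) ∧
        ∫ t in a..(x 0), f t = (x 0 - a)^(k+1)/((k:ℝ)+1) := by
      have hcont : Continuous (fun t : ℝ => -(t - x 0)^k) := by fun_prop
      obtain ⟨hI, hE⟩ := eqOn_integral ha (hcont.intervalIntegrable _ _)
        (fun t ht => h1 t ht)
      refine ⟨hI, ?_⟩
      rw [hE, intervalIntegral.integral_neg, integ_pow_sub, sub_self,
        zero_pow (by omega : k + 1 ≠ 0)]
      have e5 : a - x 0 = -(x 0 - a) := by ring
      rw [e5, hev.neg_pow]
      ring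
    -- last segment
    have S3 : IntervalIntegrable f volume (x (Fin.last m)) b ∧
        ∫ t in (x (Fin.last m))..b, f t = (b - x (Fin.last m))^(k+1)/((k:ℝ)+1) := by
      have hcont : Continuous (fun t : ℝ => (t - x (Fin.last m))^k) := by fun_prop
      obtain ⟨hI, hE⟩ := eqOn_integral hb (hcont.intervalIntegrable _ _)
        (fun t ht => h3 t ht)
      refine ⟨hI, ?_⟩
      rw [hE, integ_pow_sub, sub_self, zero_pow (by omega : k + 1 ≠ 0)]
      ring
    -- middle
    set y : ℕ → ℝ := fun j => x ⟨min j m, Nat.lt_succ_of_le (min_le_right _ _)⟩ with hy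
    have hy0 : y 0 = x 0 := by simp [hy]
    have hym : y m = x (Fin.last m) := by simp [hy, Fin.last]
    have hyc : ∀ j : ℕ, (hj : j < m) → y j = x (Fin.castSucc ⟨j, hj⟩) ∧
        y (j+1) = x (Fin.succ ⟨j, hj⟩) := by
      intro j hj
      constructor
      · simp [hy, Fin.castSucc, Fin.castAdd, Fin.castLE, Nat.min_eq_left hj.le]
      · simp [hy, Fin.succ, Nat.min_eq_left hj]
    have hint : ∀ j < m, IntervalIntegrable f volume (y j) (y (j+1)) := by
      intro j hj
      obtain ⟨ec, es⟩ := hyc j hj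
      rw [ec, es]
      exact (key ⟨j, hj⟩).1
    have hmid_int : IntervalIntegrable f volume (x 0) (x (Fin.last m)) := by
      rw [← hy0, ← hym]
      exact IntervalIntegrable.trans_iterate hint
    have hmid : ∫ t in (x 0)..(x (Fin.last m)), f t
        = ∑ i : Fin m, (x i.succ - x i.castSucc)^(k+1)/4^k := by
      rw [← hy0, ← hym, ← intervalIntegral.sum_integral_adjacent_intervals hint,
        ← Fin.sum_univ_eq_sum_range (fun j => ∫ t in (y j)..(y (j+1)), f t) m]
      refine Finset.sum_congr rfl (fun i _ => ?_)
      obtain ⟨ec, es⟩ := hyc i.1 i.isLt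
      rw [ec, es]
      exact (key ⟨i.1, i.isLt⟩).2
    rw [← intervalIntegral.integral_add_adjacent_intervals
        (S1.1.trans hmid_int) S3.1,
      ← intervalIntegral.integral_add_adjacent_intervals S1.1 hmid_int,
      S1.2, S3.2, hmid]
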